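/- Let F be a finite field and u1, u2, p, m, c1, c2, d_f, s positive integers with c1 + c2 ≥ d_f. For j = 1,…,s let M_{1,j} be a set of u1 × p matrices over F with pairwise rank distance ≥ d_f and M_{2,j} a set of u2 × m matrices with pairwise rank distance ≥ d_f, such that for all j ≠ j', i ∈ {1,2}, M ∈ M_{i,j} and M' ∈ M_{i,j'}, one has M ≠ M' and rank(M − M') ≥ c_i. Let M_3 be a set of u1 × m matrices with pairwise rank distance ≥ d_f. For j = 1,…,s let M_j be the set of (u1+u2) × (p+m) block matrices ( M_1, M_3 ; 0, M_2 ) with M_1 ∈ M_{1,j}, M_2 ∈ M_{2,j}, M_3 ∈ M_3. Then M = ∪_{j=1}^s M_j has minimum rank distance ≥ d_f, i.e. rank(X − Y) ≥ d_f for all distinct X, Y ∈ M, and |M| = Σ_{j=1}^s |M_{1,j}|·|M_{2,j}|·|M_3|. -/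
import Mathlib

set_option linter.unusedSectionVars false

open Matrix

section RankLemmas

variable {F : Type*} [Field F] {n1 n2 m1 m2 : Type*}
  [Fintype n1] [Fintype n2] [Fintype m1] [Fintype m2]

/-- embedding `(n1 → F) → (n1 ⊕ n2 → F)` by zero extension -/
noncomputable def zext : (n1 → F) →ₗ[F] (n1 ⊕ n2 → F) :=
  (LinearEquiv.sumArrowLequivProdArrow n1 n2 F F).symm.toLinearMap ∘ₗ
    LinearMap.inl F (n1 → F) (n2 → F)

lemma zext_apply (y : n1 → F) : (zext (n2 := n2) y) = Sum.elim y 0 := by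
  funext i
  cases i <;> simp [zext]

lemma zext_injective : Function.Injective (zext (F := F) (n1 := n1) (n2 := n2)) := by
  intro a b h
  funext i
  have := congrFun h (Sum.inl i)
  simpa [zext_apply] using this

lemma rank_fromBlocks_add_le (A : Matrix n1 m1 F) (B : Matrix n1 m2 F) (C : Matrix n2 m2 F) :
    A.rank + C.rank ≤ (fromBlocks A B 0 C).rank := by
  classical
  set T := (fromBlocks A B 0 C).mulVecLin with hT
  set W := LinearMap.range T with hW
  set π : ((n1 ⊕ n2) → F) →ₗ[F] (n2 → F) := LinearMap.funLeft F F Sum.inr with hπ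
  have hπT : π ∘ₗ T = C.mulVecLin ∘ₗ LinearMap.funLeft F F (Sum.inr : m2 → m1 ⊕ m2) := by
    apply LinearMap.ext
    intro z
    funext i
    simp only [LinearMap.comp_apply, hT, mulVecLin_apply, hπ, LinearMap.funLeft_apply,
      fromBlocks_mulVec, Sum.elim_inr, zero_mulVec, zero_add, Pi.add_apply]
    rfl
  -- the restriction of π to W
  set f : W →ₗ[F] (n2 → F) := π ∘ₗ W.subtype with hf
  have hrange : LinearMap.range f = LinearMap.range (C.mulVecLin) := by
    rw [hf, LinearMap.range_comp, Submodule.range_subtype, hW, ← LinearMap.range_comp, hπT,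
      LinearMap.range_comp_of_range_eq_top]
    rw [LinearMap.range_eq_top]
    exact LinearMap.funLeft_surjective_of_injective F F _ Sum.inr_injective
  have hkerfin : Submodule.map W.subtype (LinearMap.ker f) = W ⊓ LinearMap.ker π := by
    rw [hf, LinearMap.ker_comp, Submodule.map_comap_subtype]
  have hker : A.rank ≤ Module.finrank F (LinearMap.ker f) := by
    have h1 : Submodule.map (zext (n2 := n2)) (LinearMap.range A.mulVecLin) ≤
        W ⊓ LinearMap.ker π := by
      rintro _ ⟨_, ⟨x, rfl⟩, rfl⟩
      constructor
      · refine ⟨Sum.elim x 0, ?_⟩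
        rw [hT]
        funext i
        simp [mulVecLin_apply, fromBlocks_mulVec, zext_apply]
      · simp only [LinearMap.mem_ker, hπ]
        funext i
        simp [LinearMap.funLeft_apply, zext_apply]
    have h2 : A.rank = Module.finrank F
        (Submodule.map (zext (n2 := n2)) (LinearMap.range A.mulVecLin)) :=
      LinearEquiv.finrank_eq (Submodule.equivMapOfInjective _ zext_injective _)
    have h3 : Module.finrank F (W ⊓ LinearMap.ker π : Submodule F _) =
        Module.finrank F (LinearMap.ker f) := by
      rw [← hkerfin]
      exact (LinearEquiv.finrank_eq
        (Submodule.equivMapOfInjective _ (Submodule.injective_subtype W) _)).symm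
    rw [h2, ← h3]
    exact Submodule.finrank_mono h1
  have hrn : Module.finrank F W =
      Module.finrank F (LinearMap.range f) + Module.finrank F (LinearMap.ker f) :=
    (LinearMap.finrank_range_add_finrank_ker f).symm
  have : (fromBlocks A B 0 C).rank = Module.finrank F W := rfl
  rw [this, hrn, hrange]
  have : C.rank = Module.finrank F (LinearMap.range C.mulVecLin) := rfl
  omega

lemma rank_le_rank_fromBlocks_offdiag (D : Matrix n1 m2 F) :
    D.rank ≤ (fromBlocks (0 : Matrix n1 m1 F) D 0 (0 : Matrix n2 m2 F)).rank := by
  classical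
  set T := (fromBlocks (0 : Matrix n1 m1 F) D 0 (0 : Matrix n2 m2 F)).mulVecLin with hT
  have h1 : Submodule.map (zext (n2 := n2)) (LinearMap.range D.mulVecLin) ≤
      LinearMap.range T := by
    rintro _ ⟨_, ⟨y, rfl⟩, rfl⟩
    refine ⟨Sum.elim 0 y, ?_⟩
    rw [hT]
    funext i
    simp [mulVecLin_apply, fromBlocks_mulVec, zext_apply]
  have h2 : D.rank = Module.finrank F
      (Submodule.map (zext (n2 := n2)) (LinearMap.range D.mulVecLin)) :=
    LinearEquiv.finrank_eq (Submodule.equivMapOfInjective _ zext_injective _)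
  rw [h2]
  exact Submodule.finrank_mono h1

end RankLemmas

lemma Set.ncard_prod' {α β : Type*} (s : Set α) (t : Set β) :
    (s ×ˢ t).ncard = s.ncard * t.ncard := by
  rw [← Nat.card_coe_set_eq, ← Nat.card_coe_set_eq, ← Nat.card_coe_set_eq,
    Nat.card_congr (Equiv.Set.prod s t), Nat.card_prod]

/-- Lemma 3.3: a union of blocks of rank metric codes
`( M1, M3 ; 0, M2 )` with cross rank-distance restrictions `c1 + c2 ≥ d_f` has minimum
rank distance at least `d_f` and cardinality `Σ_j |M_{1,j}|·|M_{2,j}|·|M3|`. -/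
theorem fdrm_union_construction
    (F : Type*) [Field F] [Fintype F] (u1 u2 p m c1 c2 df s : ℕ)
    (hu1 : 0 < u1) (hu2 : 0 < u2) (hp : 0 < p) (hm : 0 < m)
    (hc1 : 0 < c1) (hc2 : 0 < c2) (hdf : 0 < df) (hs : 0 < s)
    (hc : df ≤ c1 + c2)
    (𝓜1 : Fin s → Set (Matrix (Fin u1) (Fin p) F))
    (𝓜2 : Fin s → Set (Matrix (Fin u2) (Fin m) F))
    (h𝓜1 : ∀ j, ∀ M ∈ 𝓜1 j, ∀ M' ∈ 𝓜1 j, M ≠ M' → df ≤ (M - M').rank)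
    (h𝓜2 : ∀ j, ∀ M ∈ 𝓜2 j, ∀ M' ∈ 𝓜2 j, M ≠ M' → df ≤ (M - M').rank)
    (h𝓜1cross : ∀ j j', j ≠ j' → ∀ M ∈ 𝓜1 j, ∀ M' ∈ 𝓜1 j',
      M ≠ M' ∧ c1 ≤ (M - M').rank)
    (h𝓜2cross : ∀ j j', j ≠ j' → ∀ M ∈ 𝓜2 j, ∀ M' ∈ 𝓜2 j',
      M ≠ M' ∧ c2 ≤ (M - M').rank)
    (𝓜3 : Set (Matrix (Fin u1) (Fin m) F))
    (h𝓜3 : ∀ A ∈ 𝓜3, ∀ B ∈ 𝓜3, A ≠ B → df ≤ (A - B).rank) :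
    let 𝓜 : Set (Matrix (Fin u1 ⊕ Fin u2) (Fin p ⊕ Fin m) F) :=
      ⋃ j, {X | ∃ M1 ∈ 𝓜1 j, ∃ M2 ∈ 𝓜2 j, ∃ M3 ∈ 𝓜3,
        X = Matrix.fromBlocks M1 M3 0 M2}
    (∀ X ∈ 𝓜, ∀ Y ∈ 𝓜, X ≠ Y → df ≤ (X - Y).rank) ∧
    𝓜.ncard = ∑ j : Fin s, (𝓜1 j).ncard * (𝓜2 j).ncard * 𝓜3.ncard := by
  classical
  intro 𝓜
  set S : Fin s → Set (Matrix (Fin u1 ⊕ Fin u2) (Fin p ⊕ Fin m) F) :=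
    fun j => {X | ∃ M1 ∈ 𝓜1 j, ∃ M2 ∈ 𝓜2 j, ∃ M3 ∈ 𝓜3,
      X = Matrix.fromBlocks M1 M3 0 M2} with hS
  have h𝓜 : 𝓜 = ⋃ j, S j := rfl
  constructor
  · -- distance
    intro X hX Y hY hXY
    rw [h𝓜, Set.mem_iUnion] at hX hY
    obtain ⟨j, hX⟩ := hX
    obtain ⟨j', hY⟩ := hY
    simp only [hS, Set.mem_setOf_eq] at hX hY
    obtain ⟨a, ha, b, hb, c, hc3, rfl⟩ := hX
    obtain ⟨a', ha', b', hb', c', hc3', rfl⟩ := hY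
    have hdiff : fromBlocks a c 0 b - fromBlocks a' c' 0 b'
        = fromBlocks (a - a') (c - c') 0 (b - b') := by
      ext i k
      cases i <;> cases k <;> simp [Matrix.fromBlocks]
    rw [hdiff]
    by_cases hjj : j = j'
    · subst hjj
      by_cases haa : a = a'
      · by_cases hbb : b = b'
        · have hcc : c ≠ c' := by
            rintro rfl
            exact hXY (by rw [haa, hbb])
          calc df ≤ (c - c').rank := h𝓜3 c hc3 c' hc3' hcc
            _ ≤ _ := by
              rw [haa, hbb, sub_self, sub_self]
              exact rank_le_rank_fromBlocks_offdiag _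
        · calc df ≤ (b - b').rank := h𝓜2 j b hb b' hb' hbb
            _ ≤ (a - a').rank + (b - b').rank := Nat.le_add_left _ _
            _ ≤ _ := rank_fromBlocks_add_le _ _ _
      · calc df ≤ (a - a').rank := h𝓜1 j a ha a' ha' haa
          _ ≤ (a - a').rank + (b - b').rank := Nat.le_add_right _ _
          _ ≤ _ := rank_fromBlocks_add_le _ _ _
    · have h1 := (h𝓜1cross j j' hjj a ha a' ha').2
      have h2 := (h𝓜2cross j j' hjj b hb b' hb').2
      calc df ≤ c1 + c2 := hc
        _ ≤ (a - a').rank + (b - b').rank := Nat.add_le_add h1 h2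
        _ ≤ _ := rank_fromBlocks_add_le _ _ _
  · -- cardinality
    set φ : Matrix (Fin u1) (Fin p) F × Matrix (Fin u2) (Fin m) F × Matrix (Fin u1) (Fin m) F
        → Matrix (Fin u1 ⊕ Fin u2) (Fin p ⊕ Fin m) F :=
      fun t => fromBlocks t.1 t.2.2 0 t.2.1 with hφ
    have hφinj : Function.Injective φ := by
      rintro ⟨a, b, c⟩ ⟨a', b', c'⟩ h
      simp only [hφ] at h
      have h11 := congrArg Matrix.toBlocks₁₁ h
      have h12 := congrArg Matrix.toBlocks₁₂ h
      have h22 := congrArg Matrix.toBlocks₂₂ h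
      simp only [Matrix.toBlocks_fromBlocks₁₁, Matrix.toBlocks_fromBlocks₁₂,
        Matrix.toBlocks_fromBlocks₂₂] at h11 h12 h22
      simp [Prod.ext_iff, h11, h12, h22]
    have hSj : ∀ j, S j = φ '' ((𝓜1 j) ×ˢ ((𝓜2 j) ×ˢ 𝓜3)) := by
      intro j
      ext X
      constructor
      · rintro ⟨a, ha, b, hb, c, hc3, rfl⟩
        exact ⟨(a, b, c), ⟨ha, hb, hc3⟩, rfl⟩
      · rintro ⟨⟨a, b, c⟩, ⟨ha, hb, hc3⟩, rfl⟩
        exact ⟨a, ha, b, hb, c, hc3, rfl⟩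
    have hdisj : ∀ j j' : Fin s, j ≠ j' → Disjoint (S j) (S j') := by
      intro j j' hjj
      rw [Set.disjoint_left]
      rintro X ⟨a, ha, b, hb, c, hc3, rfl⟩ ⟨a', ha', b', hb', c', hc3', hEq⟩
      have h11 := congrArg Matrix.toBlocks₁₁ hEq
      simp only [Matrix.toBlocks_fromBlocks₁₁] at h11
      exact (h𝓜1cross j j' hjj a ha a' ha').1 h11
    calc 𝓜.ncard = (⋃ j, S j).ncard := by rw [h𝓜]
      _ = (⋃ j, S j).toFinset.card := Set.ncard_eq_toFinset_card' _
      _ = (Finset.univ.biUnion fun j => (S j).toFinset).card := by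
          rw [Set.toFinset_iUnion]
      _ = ∑ j, (S j).toFinset.card := Finset.card_biUnion (by
          intro x _ y _ hxy
          simpa [Set.disjoint_toFinset] using hdisj x y hxy)
      _ = ∑ j, (S j).ncard :=
          Finset.sum_congr rfl fun j _ => (Set.ncard_eq_toFinset_card' _).symm
      _ = ∑ j : Fin s, (𝓜1 j).ncard * (𝓜2 j).ncard * 𝓜3.ncard := by
          refine Finset.sum_congr rfl fun j _ => ?_
          rw [hSj, Set.ncard_image_of_injective _ hφinj, Set.ncard_prod', Set.ncard_prod',
            mul_assoc]
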